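/- Let n ≥ 1 and f a permutation of {1,…,n}. The Yang–Baxter monoid S(X,r_f) of the permutation idempotent solution r_f is left cancellative: for all u, a, b ∈ S(X,r_f), if u·a = u·b then a = b. -/

import Mathlib

noncomputable section

/-- The congruence on the free monoid generated by the defining relations
`x_j x_p = f(x_p) x_p` of the Yang–Baxter monoid `S(X, r_f)`. -/
def ybCon (n : ℕ) (f : Equiv.Perm (Fin n)) : Con (FreeMonoid (Fin n)) :=
  conGen fun a b =>
    ∃ j p : Fin n, a = FreeMonoid.of j * FreeMonoid.of p ∧
      b = FreeMonoid.of (f p) * FreeMonoid.of p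

/-- The Yang–Baxter monoid `S(X, r_f)`. -/
abbrev YBS (n : ℕ) (f : Equiv.Perm (Fin n)) := (ybCon n f).Quotient

namespace YBaux

variable {n : ℕ} (f : Equiv.Perm (Fin n))

/-- invariant: length and last letter -/
def g (w : FreeMonoid (Fin n)) : ℕ × Option (Fin n) :=
  (w.toList.length, w.toList.reverse.head?)

lemma g_of_rel' {w w' : FreeMonoid (Fin n)}
    (h : ConGen.Rel (fun a b => ∃ j p : Fin n, a = FreeMonoid.of j * FreeMonoid.of p ∧
      b = FreeMonoid.of (f p) * FreeMonoid.of p) w w') : g w = g w' := by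
  induction h with
  | of a b hab =>
    obtain ⟨j, p, rfl, rfl⟩ := hab
    rfl
  | refl => rfl
  | symm _ ih => exact ih.symm
  | trans _ _ ih1 ih2 => exact ih1.trans ih2
  | mul _ _ ih1 ih2 =>
    simp only [g, FreeMonoid.toList_mul, List.length_append, List.reverse_append,
      List.head?_append, Prod.mk.injEq, Prod.ext_iff] at *
    exact ⟨by omega, by rw [ih1.2, ih2.2]⟩

lemma g_of_rel {w w' : FreeMonoid (Fin n)} (h : ybCon n f w w') : g w = g w' :=
  g_of_rel' f h

lemma pair_rel (j k q : Fin n) :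
    ybCon n f (FreeMonoid.of j * FreeMonoid.of q) (FreeMonoid.of k * FreeMonoid.of q) := by
  have h1 : ybCon n f (FreeMonoid.of j * FreeMonoid.of q)
      (FreeMonoid.of (f q) * FreeMonoid.of q) :=
    ConGen.Rel.of _ _ ⟨j, q, rfl, rfl⟩
  have h2 : ybCon n f (FreeMonoid.of k * FreeMonoid.of q)
      (FreeMonoid.of (f q) * FreeMonoid.of q) :=
    ConGen.Rel.of _ _ ⟨k, q, rfl, rfl⟩
  exact h1.trans h2.symm

lemma key : ∀ (l₁ l₂ : List (Fin n)) (p : Fin n), l₁.length = l₂.length →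
    ybCon n f (FreeMonoid.ofList (l₁ ++ [p])) (FreeMonoid.ofList (l₂ ++ [p])) := by
  intro l₁
  induction l₁ with
  | nil =>
    intro l₂ p h
    rw [List.length_nil] at h
    obtain rfl : l₂ = [] := (List.length_eq_zero_iff.mp h.symm)
    exact (ybCon n f).refl _
  | cons a t ih =>
    intro l₂ p h
    match l₂ with
    | [] => simp at h
    | b :: s =>
      simp only [List.length_cons, Nat.add_right_cancel_iff] at h
      have h1 : ybCon n f (FreeMonoid.ofList ((a :: t) ++ [p]))
          (FreeMonoid.of a * FreeMonoid.ofList (s ++ [p])) := by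
        rw [List.cons_append, FreeMonoid.ofList_cons]
        exact ((ybCon n f).refl (FreeMonoid.of a)).mul (ih s p h)
      -- now change head a to b
      obtain ⟨q, rest, hq⟩ : ∃ q rest, s ++ [p] = q :: rest := by
        cases s with
        | nil => exact ⟨p, [], rfl⟩
        | cons x xs => exact ⟨x, xs ++ [p], rfl⟩
      have h2 : ybCon n f (FreeMonoid.of a * FreeMonoid.ofList (s ++ [p]))
          (FreeMonoid.of b * FreeMonoid.ofList (s ++ [p])) := by
        rw [hq, FreeMonoid.ofList_cons, ← mul_assoc, ← mul_assoc]
        exact (pair_rel f a b q).mul ((ybCon n f).refl _)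
      refine h1.trans (h2.trans ?_)
      rw [List.cons_append, FreeMonoid.ofList_cons]
      exact (ybCon n f).refl _

end YBaux

/-- the Yang–Baxter monoid `S(X,r_f)` of a permutation idempotent
solution is left cancellative. -/
theorem stmt_11 (n : ℕ) [NeZero n] (f : Equiv.Perm (Fin n)) :
    ∀ u a b : YBS n f, u * a = u * b → a = b := by
  intro u a b
  induction u using Con.induction_on with | H u =>
  induction a using Con.induction_on with | H a =>
  induction b using Con.induction_on with | H b =>
  intro h
  rw [← Con.coe_mul, ← Con.coe_mul, Con.eq] at h
  have hg := YBaux.g_of_rel f h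
  simp only [YBaux.g, FreeMonoid.toList_mul, List.length_append, List.reverse_append,
    List.head?_append, Prod.mk.injEq] at hg
  have hlen : a.toList.length = b.toList.length := by omega
  rw [Con.eq]
  rcases ha : a.toList.reverse with _ | ⟨p, ta⟩
  · have ha' : a.toList = [] := by
      have := congrArg List.reverse ha; simpa using this
    have hb' : b.toList = [] := by
      rw [ha'] at hlen; exact List.length_eq_zero_iff.mp hlen.symm
    have : a = b := by
      have : a.toList = b.toList := by rw [ha', hb']
      exact FreeMonoid.toList.injective this
    rw [this]; exact (ybCon n f).refl _
  · rcases hb : b.toList.reverse with _ | ⟨q, tb⟩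
    · exfalso
      have hb' : b.toList = [] := by
        have := congrArg List.reverse hb; simpa using this
      rw [hb'] at hlen
      have : a.toList = [] := List.length_eq_zero_iff.mp hlen
      rw [this] at ha; simp at ha
    · rw [ha, hb] at hg
      simp only [List.head?_cons] at hg
      have hpq : (Option.some p).or ((FreeMonoid.toList u).reverse.head?) =
          (Option.some q).or ((FreeMonoid.toList u).reverse.head?) := hg.2
      have hpq' : p = q := by
        simp only [Option.or] at hpq
        injection hpq
      have ha2 : a = FreeMonoid.ofList (ta.reverse ++ [p]) := by
        have := congrArg List.reverse ha
        simpa using FreeMonoid.toList.injective (by simpa using this)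
      have hb2 : b = FreeMonoid.ofList (tb.reverse ++ [q]) := by
        have := congrArg List.reverse hb
        simpa using FreeMonoid.toList.injective (by simpa using this)
      rw [ha2, hb2, ← hpq']
      apply YBaux.key
      have := hlen
      rw [← List.length_reverse (as := a.toList), ← List.length_reverse (as := b.toList), ha, hb] at this
      simpa using this
end
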